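/- Let (A, B, H) be a P-module with H finite-dimensional, and suppose there exists a unit vector ξ ∈ H and a ray p with lim_{n→∞} ‖pₙξ‖ = ℓ > 0. Then there exists a nonzero vector η ∈ H with ‖η‖ = ℓ and a ray p̂ such that ‖p̂ₙη‖ = ‖η‖ for all n ≥ 1. -/
import Mathlib


open Filter Topology
open scoped InnerProductSpace

/-- Action of a finite binary word on a vector: digit `false` acts by `A`,
digit `true` by `B`, with the first digit acting first. -/
noncomputable def wordAct {H : Type*} [NormedAddCommGroup H] [InnerProductSpace ℂ H]
    (A B : H →L[ℂ] H) : List Bool → H → H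
  | [], ξ => ξ
  | b :: rest, ξ => wordAct A B rest ((if b then B else A) ξ)

/-- The length-`n` prefix of a ray `p : ℕ → Bool` as a list. -/
def pre (p : ℕ → Bool) (n : ℕ) : List Bool := List.ofFn fun i : Fin n => p i

/-- The Pythagorean equality `A*A + B*B = id`. -/
def IsPyth {H : Type*} [NormedAddCommGroup H] [InnerProductSpace ℂ H] [CompleteSpace H]
    (A B : H →L[ℂ] H) : Prop :=
  (ContinuousLinearMap.adjoint A).comp A + (ContinuousLinearMap.adjoint B).comp B =
    ContinuousLinearMap.id ℂ H

/-- `ξ` is a nonzero vector contained in the ray `p`. -/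
noncomputable def ContainedIn {H : Type*} [NormedAddCommGroup H] [InnerProductSpace ℂ H]
    (A B : H →L[ℂ] H) (p : ℕ → Bool) (ξ : H) : Prop :=
  ξ ≠ 0 ∧ ∀ n : ℕ, ‖wordAct A B (pre p n) ξ‖ = ‖ξ‖


section aux
variable {H : Type*} [NormedAddCommGroup H] [InnerProductSpace ℂ H]

lemma wordAct_append (A B : H →L[ℂ] H) (u v : List Bool) (ξ : H) :
    wordAct A B (u ++ v) ξ = wordAct A B v (wordAct A B u ξ) := by
  induction u generalizing ξ with
  | nil => rfl
  | cons b rest ih => simp [wordAct, ih]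

lemma continuous_wordAct (A B : H →L[ℂ] H) (w : List Bool) :
    Continuous (wordAct A B w) := by
  induction w with
  | nil => exact continuous_id
  | cons b rest ih =>
      show Continuous fun ξ => wordAct A B rest ((if b then B else A) ξ)
      exact ih.comp (ContinuousLinearMap.continuous _)

lemma pre_add (p : ℕ → Bool) (m n : ℕ) :
    pre p (m + n) = pre p m ++ pre (fun i => p (m + i)) n := by
  simp [pre, List.ofFn_add]

lemma pre_succ (p : ℕ → Bool) (n : ℕ) :
    pre p (n + 1) = pre p n ++ [p n] := by
  rw [pre_add]; rfl

variable [CompleteSpace H]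

lemma norm_step {A B : H →L[ℂ] H} (h : IsPyth A B) (b : Bool) (x : H) :
    ‖(if b then B else A) x‖ ≤ ‖x‖ := by
  have key : (‖A x‖ : ℂ) ^ 2 + (‖B x‖ : ℂ) ^ 2 = (‖x‖ : ℂ) ^ 2 := by
    have h1 : ⟪((ContinuousLinearMap.adjoint A).comp A +
        (ContinuousLinearMap.adjoint B).comp B) x, x⟫_ℂ = ⟪x, x⟫_ℂ := by
      rw [h]; rfl
    simpa [ContinuousLinearMap.adjoint_inner_left, inner_add_left,
      inner_self_eq_norm_sq_to_K] using h1
  have key' : ‖A x‖ ^ 2 + ‖B x‖ ^ 2 = ‖x‖ ^ 2 := by exact_mod_cast key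
  have := norm_nonneg (A x); have := norm_nonneg (B x); have := norm_nonneg x
  cases b
  · show ‖A x‖ ≤ ‖x‖; nlinarith
  · show ‖B x‖ ≤ ‖x‖; nlinarith

lemma norm_wordAct_le {A B : H →L[ℂ] H} (h : IsPyth A B) (w : List Bool) (x : H) :
    ‖wordAct A B w x‖ ≤ ‖x‖ := by
  induction w generalizing x with
  | nil => exact le_refl _
  | cons b rest ih =>
      show ‖wordAct A B rest ((if b then B else A) x)‖ ≤ ‖x‖
      exact (ih _).trans (norm_step h b x)

end aux

theorem stmt7 {H : Type*} [NormedAddCommGroup H] [InnerProductSpace ℂ H]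
    [FiniteDimensional ℂ H] (A B : H →L[ℂ] H) (hAB : IsPyth A B)
    (ξ : H) (hξ : ‖ξ‖ = 1) (p : ℕ → Bool) (ℓ : ℝ) (hℓ : 0 < ℓ)
    (hlim : Tendsto (fun n : ℕ => ‖wordAct A B (pre p n) ξ‖) atTop (𝓝 ℓ)) :
    ∃ (η : H) (phat : ℕ → Bool), ‖η‖ = ℓ ∧
      ∀ n : ℕ, ‖wordAct A B (pre phat n) η‖ = ‖η‖ := by
  haveI : ProperSpace H := FiniteDimensional.proper ℂ H
  set f : ℕ → H := fun n => wordAct A B (pre p n) ξ with hf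
  have hanti : Antitone fun n => ‖f n‖ := by
    refine antitone_nat_of_succ_le fun n => ?_
    simp only [hf, pre_succ, wordAct_append]
    exact norm_step hAB _ _
  have hge : ∀ n, ℓ ≤ ‖f n‖ := fun n => hanti.le_of_tendsto hlim n
  have hball : ∀ n, f n ∈ Metric.closedBall (0 : H) 1 := by
    intro n
    simp only [Metric.mem_closedBall, dist_zero_right]
    calc ‖f n‖ ≤ ‖ξ‖ := norm_wordAct_le hAB _ _
    _ = 1 := hξ
  obtain ⟨η, -, φ, hφ, hφt⟩ :=
    (isCompact_closedBall (0 : H) 1).tendsto_subseq hball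
  set q : ℕ → (ℕ → Bool) := fun k i => p (φ k + i) with hq
  obtain ⟨phat, ψ, hψ, hψt⟩ := CompactSpace.tendsto_subseq q
  refine ⟨η, phat, ?_, ?_⟩
  · have h1 : Tendsto (fun k => ‖f (φ k)‖) atTop (𝓝 ‖η‖) :=
      (continuous_norm.continuousAt.tendsto.comp hφt)
    have h2 : Tendsto (fun k => ‖f (φ k)‖) atTop (𝓝 ℓ) :=
      hlim.comp hφ.tendsto_atTop
    exact tendsto_nhds_unique h1 h2
  · intro n
    have hη : ‖η‖ = ℓ := by
      have h1 : Tendsto (fun k => ‖f (φ k)‖) atTop (𝓝 ‖η‖) :=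
        (continuous_norm.continuousAt.tendsto.comp hφt)
      exact tendsto_nhds_unique h1 (hlim.comp hφ.tendsto_atTop)
    rw [hη]
    have hle : ‖wordAct A B (pre phat n) η‖ ≤ ℓ := hη ▸ norm_wordAct_le hAB _ _
    have hev : ∀ᶠ j in atTop, pre (q (ψ j)) n = pre phat n := by
      have : ∀ i : Fin n, ∀ᶠ j in atTop, q (ψ j) (i : ℕ) = phat (i : ℕ) := by
        intro i
        have := (tendsto_pi_nhds.1 hψt) (i : ℕ)
        exact this (by simp [mem_nhds_discrete] : {phat (i:ℕ)} ∈ 𝓝 (phat (i:ℕ)))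
      filter_upwards [Filter.eventually_all.2 this] with j hj
      simp only [pre]
      exact congrArg List.ofFn (funext fun i => hj i)
    have hkey : Tendsto (fun j => wordAct A B (pre phat n) (f (φ (ψ j))))
        atTop (𝓝 (wordAct A B (pre phat n) η)) :=
      ((continuous_wordAct A B (pre phat n)).continuousAt.tendsto).comp
        (hφt.comp hψ.tendsto_atTop)
    have hnorm : Tendsto (fun j => ‖wordAct A B (pre phat n) (f (φ (ψ j)))‖)
        atTop (𝓝 ‖wordAct A B (pre phat n) η‖) :=
      (continuous_norm.continuousAt.tendsto).comp hkey
    have hgelim : ℓ ≤ ‖wordAct A B (pre phat n) η‖ := by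
      refine ge_of_tendsto hnorm ?_
      filter_upwards [hev] with j hj
      have : wordAct A B (pre phat n) (f (φ (ψ j))) = f (φ (ψ j) + n) := by
        rw [← hj, hf]
        simp only
        rw [← wordAct_append, ← pre_add]
      rw [this]
      exact hge _
    linarith
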